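/- arXiv:2402.03745 — 3 statements merged into one kernel-verified Lean document; each statement's English description precedes it below -/
import Mathlib

section
/- Let L : {1,…,N}² → ℤ^d be a link function such that for every t ∈ ℤ^d and every k ∈ {1,…,N}, #{l ∈ {1,…,N} : L(k,l) = t} ≤ B and #{l : L(l,k) = t} ≤ B. Let w : {1,…,p} → Λ be a word with F distinct letters (F = cardinality of the image of w). Define Π*_L(w) to be the set of circuits π : {0,1,…,p} → {1,…,N} with π(0) = π(p) such that for all i, j ∈ {1,…,p}, w(i) = w(j) implies L(π(i−1), π(i)) = L(π(j−1), π(j)). Then #Π*_L(w) ≤ B^{p+1} · N^{F+1}. -/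
open Finset

/-- Rank of `x` among the `l` with `L k l = t`. -/
private def lrank {N d : ℕ} (L : Fin N → Fin N → Fin d → ℤ)
    (k : Fin N) (t : Fin d → ℤ) (x : Fin N) : ℕ :=
  (Finset.univ.filter fun l => L k l = t ∧ l < x).card

private lemma lrank_strict {N d : ℕ} (L : Fin N → Fin N → Fin d → ℤ)
    (k : Fin N) (t : Fin d → ℤ) {x y : Fin N} (hx : L k x = t) (hxy : x < y) :
    lrank L k t x < lrank L k t y := by
  classical
  apply Finset.card_lt_card
  constructor
  · intro l hl
    simp only [Finset.mem_filter] at *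
    exact ⟨hl.1, hl.2.1, lt_trans hl.2.2 hxy⟩
  · intro hsub
    have hx' : x ∈ Finset.univ.filter fun l => L k l = t ∧ l < y := by
      simp [hx, hxy]
    have := hsub hx'
    simp only [Finset.mem_filter] at this
    exact lt_irrefl x this.2.2

private lemma lrank_inj {N d : ℕ} (L : Fin N → Fin N → Fin d → ℤ)
    (k : Fin N) (t : Fin d → ℤ) {x y : Fin N} (hx : L k x = t) (hy : L k y = t)
    (h : lrank L k t x = lrank L k t y) : x = y := by
  rcases lt_trichotomy x y with hlt | he | hlt
  · exact absurd h (Nat.ne_of_lt (lrank_strict L k t hx hlt))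
  · exact he
  · exact absurd h.symm (Nat.ne_of_lt (lrank_strict L k t hy hlt))

private lemma lrank_lt {N d B : ℕ} (L : Fin N → Fin N → Fin d → ℤ)
    (k : Fin N) (t : Fin d → ℤ) {x : Fin N} (hx : L k x = t)
    (hBk : {l : Fin N | L k l = t}.ncard ≤ B) : lrank L k t x < B := by
  classical
  have hcard : {l : Fin N | L k l = t}.ncard
      = (Finset.univ.filter fun l => L k l = t).card := by
    rw [← Set.ncard_coe_finset]
    congr 1
    ext l
    simp
  have hlt : lrank L k t x < (Finset.univ.filter fun l => L k l = t).card := by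
    apply Finset.card_lt_card
    constructor
    · intro l hl
      simp only [Finset.mem_filter] at *
      exact ⟨hl.1, hl.2.1⟩
    · intro hsub
      have hx' : x ∈ Finset.univ.filter fun l => L k l = t := by simp [hx]
      have := hsub hx'
      simp only [Finset.mem_filter] at this
      exact lt_irrefl x this.2.2
  omega

/-- If a link function `L` on `{1,…,N}²` (valued in `ℤ^d`) satisfies Property B with
constant `B` (in both coordinates), then for any word `w` of length `p` with `F`
distinct letters, the set `Π*_L(w)` of circuits compatible with `w` has at most
`B^(p+1) · N^(F+1)` elements. -/
theorem card_PiStar_word_le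
    {Λ : Type*} (N p B d : ℕ) (L : Fin N → Fin N → Fin d → ℤ)
    (hB : ∀ (t : Fin d → ℤ) (k : Fin N),
      {l : Fin N | L k l = t}.ncard ≤ B ∧ {l : Fin N | L l k = t}.ncard ≤ B)
    (w : Fin p → Λ) :
    {π : Fin (p + 1) → Fin N | π 0 = π (Fin.last p) ∧
        ∀ i j : Fin p, w i = w j →
          L (π i.castSucc) (π i.succ) = L (π j.castSucc) (π j.succ)}.ncard
      ≤ B ^ (p + 1) * N ^ ((Set.range w).ncard + 1) := by
  classical
  set S := {π : Fin (p + 1) → Fin N | π 0 = π (Fin.last p) ∧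
        ∀ i j : Fin p, w i = w j →
          L (π i.castSucc) (π i.succ) = L (π j.castSucc) (π j.succ)} with hSdef
  rcases Nat.eq_zero_or_pos N with hN | hN
  · subst hN
    have hS : S = ∅ := Set.eq_empty_of_forall_notMem fun π _ => (π 0).elim0
    rw [hS]
    simp
  -- now N > 0
  have z : Fin N := ⟨0, hN⟩
  have hB1 : 1 ≤ B := by
    have h1 := (hB (L z z) z).1
    have hne : z ∈ {l : Fin N | L z l = L z z} := rfl
    have hpos : 0 < {l : Fin N | L z l = L z z}.ncard :=
      (Set.ncard_pos (Set.toFinite _)).mpr ⟨z, hne⟩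
    omega
  -- first-occurrence predicate
  set fOcc : Fin p → Prop := fun i => ∀ i' : Fin p, i' < i → w i' ≠ w i with hfOcc
  have prevP : ∀ i : Fin p, ¬ fOcc i → ∃ i' : Fin p, i' < i ∧ w i' = w i := by
    intro i h
    simp only [hfOcc] at h
    push_neg at h
    exact h
  set Free : Finset (Fin (p + 1)) :=
    insert 0 ((Finset.univ.filter fOcc).image Fin.succ) with hFreeDef
  have hzeroFree : (0 : Fin (p + 1)) ∈ Free := Finset.mem_insert_self _ _
  have hsuccFree : ∀ i : Fin p, fOcc i → i.succ ∈ Free := by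
    intro i hi
    exact Finset.mem_insert_of_mem (Finset.mem_image_of_mem _ (by simpa using hi))
  -- bound on the number of free positions
  have hrange : (Set.range w).ncard = (Finset.univ.image w).card := by
    rw [← Set.ncard_coe_finset, Finset.coe_image, Finset.coe_univ, Set.image_univ]
  have hFreeCard : Free.card ≤ (Set.range w).ncard + 1 := by
    have h1 : Free.card ≤ ((Finset.univ.filter fOcc).image Fin.succ).card + 1 :=
      Finset.card_insert_le _ _
    have h2 : ((Finset.univ.filter fOcc).image Fin.succ).card
        ≤ (Finset.univ.filter fOcc).card := Finset.card_image_le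
    have h3 : (Finset.univ.filter fOcc).card ≤ (Finset.univ.image w).card := by
      apply Finset.card_le_card_of_injOn w
      · intro i _
        exact Finset.mem_image_of_mem _ (Finset.mem_univ _)
      · intro i1 h1' i2 h2' hw
        simp only [Finset.coe_filter, Set.mem_setOf_eq, Finset.mem_univ, true_and,
          hfOcc] at h1' h2'
        rcases lt_trichotomy i1 i2 with hlt | he | hlt
        · exact absurd hw (h2' i1 hlt)
        · exact he
        · exact absurd hw.symm (h1' i2 hlt)
    omega
  -- the encoding
  set enc : (Fin (p + 1) → Fin N) → (Fin (p + 1) → Fin N) × (Fin (p + 1) → ℕ) :=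
    fun π =>
      (fun j => if j ∈ Free then π j else ⟨0, hN⟩,
       fun j => Fin.cases 0
         (fun i => if h : fOcc i then 0
           else lrank L (π i.castSucc)
             (L (π ((prevP i h).choose).castSucc) (π ((prevP i h).choose).succ))
             (π i.succ)) j) with hencDef
  -- target sets
  set A : Set (Fin (p + 1) → Fin N) := {a | ∀ j ∉ Free, a j = ⟨0, hN⟩} with hA
  set C : Set (Fin (p + 1) → ℕ) := {b | ∀ j, b j < B} with hC
  have hCfin : C.Finite := by
    apply Set.Finite.subset (Set.Finite.pi fun _ : Fin (p + 1) => Set.finite_Iio B)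
    intro b hb
    rw [Set.mem_pi]
    intro j _
    exact hb j
  have hTfin : (A ×ˢ C).Finite := Set.Finite.prod (Set.toFinite A) hCfin
  -- maps to
  have hmaps : ∀ π ∈ S, enc π ∈ A ×ˢ C := by
    intro π hπ
    constructor
    · intro j hj
      simp only [hencDef]
      exact if_neg hj
    · intro j
      simp only [hencDef]
      induction j using Fin.cases with
      | zero => simp; omega
      | succ i =>
        rw [Fin.cases_succ]
        by_cases h : fOcc i
        · rw [dif_pos h]; omega
        · rw [dif_neg h]
          have hw := (prevP i h).choose_spec.2
          have hL := hπ.2 ((prevP i h).choose) i hw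
          exact lrank_lt L _ _ hL.symm (hB _ _).1
  -- injectivity
  have hinj : Set.InjOn enc S := by
    intro π hπ π' hπ' he
    have ha : ∀ j, (enc π).1 j = (enc π').1 j := fun j => congrFun (congrArg Prod.fst he) j
    have hb : ∀ j, (enc π).2 j = (enc π').2 j := fun j => congrFun (congrArg Prod.snd he) j
    have key : ∀ n : ℕ, ∀ j : Fin (p + 1), j.val ≤ n → π j = π' j := by
      intro n
      induction n with
      | zero =>
        intro j hj
        have hj0 : j = 0 := Fin.ext (Nat.le_zero.mp hj)
        subst hj0
        have := ha 0
        simpa only [hencDef, if_pos hzeroFree] using this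
      | succ n ih =>
        intro j hj
        rcases Nat.lt_or_ge j.val (n + 1) with hlt | hge
        · exact ih j (Nat.lt_succ_iff.mp hlt)
        have hjval : j.val = n + 1 := le_antisymm hj hge
        rcases Fin.eq_zero_or_eq_succ j with rfl | ⟨i, rfl⟩
        · have := ha 0
          simpa only [hencDef, if_pos hzeroFree] using this
        by_cases h : fOcc i
        · have := ha i.succ
          simpa only [hencDef, if_pos (hsuccFree i h)] using this
        -- forced position
        have hival : i.val = n := by
          have : (i.succ : Fin (p + 1)).val = i.val + 1 := rfl
          omega
        set i0 : Fin p := (prevP i h).choose with hi0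
        have hspec := (prevP i h).choose_spec
        have hi0lt : i0 < i := hspec.1
        have e1 : π i.castSucc = π' i.castSucc := ih i.castSucc (by simp [Fin.castSucc, hival])
        have e2 : π i0.castSucc = π' i0.castSucc := by
          apply ih
          have : (i0.castSucc : Fin (p + 1)).val = i0.val := rfl
          have := Fin.lt_def.mp hi0lt
          omega
        have e3 : π i0.succ = π' i0.succ := by
          apply ih
          have : (i0.succ : Fin (p + 1)).val = i0.val + 1 := rfl
          have := Fin.lt_def.mp hi0lt
          omega
        have hbj := hb i.succ
        simp only [hencDef, Fin.cases_succ, dif_neg h] at hbj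
        rw [← hi0] at hbj
        rw [← e1, ← e2, ← e3] at hbj
        have hLπ := hπ.2 i0 i hspec.2
        have hLπ' := hπ'.2 i0 i hspec.2
        rw [← e1, ← e2, ← e3] at hLπ'
        exact lrank_inj L _ _ hLπ.symm hLπ'.symm hbj
    exact funext fun j => key j.val j le_rfl
  -- cardinality of the target
  have hcardA : Nat.card A = N ^ Free.card := by
    have eA : A ≃ (↥Free → Fin N) :=
      { toFun := fun a j => a.1 j
        invFun := fun f => ⟨fun j => if h : j ∈ Free then f ⟨j, h⟩ else ⟨0, hN⟩,
          fun j hj => dif_neg hj⟩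
        left_inv := fun a => by
          ext j
          by_cases h : j ∈ Free
          · simp [h]
          · simp [h, a.2 j h]
        right_inv := fun f => by
          ext j
          simp }
    rw [Nat.card_congr eA]
    simp [Nat.card_eq_fintype_card, Fintype.card_fun]
  have hcardC : Nat.card C = B ^ (p + 1) := by
    have eC : C ≃ (Fin (p + 1) → Fin B) :=
      { toFun := fun b j => ⟨b.1 j, b.2 j⟩
        invFun := fun f => ⟨fun j => (f j : ℕ), fun j => (f j).2⟩
        left_inv := fun b => rfl
        right_inv := fun f => by ext j; rfl }
    rw [Nat.card_congr eC]
    simp [Nat.card_eq_fintype_card, Fintype.card_fun]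
  have hcardT : (A ×ˢ C).ncard = N ^ Free.card * B ^ (p + 1) := by
    rw [← Nat.card_coe_set_eq, Nat.card_congr (Equiv.Set.prod A C), Nat.card_prod,
      hcardA, hcardC]
  have hle : S.ncard ≤ (A ×ˢ C).ncard :=
    Set.ncard_le_ncard_of_injOn enc hmaps hinj hTfin
  rw [hcardT] at hle
  calc S.ncard ≤ N ^ Free.card * B ^ (p + 1) := hle
    _ ≤ N ^ ((Set.range w).ncard + 1) * B ^ (p + 1) := by
        apply Nat.mul_le_mul_right
        exact Nat.pow_le_pow_right hN hFreeCard
    _ = B ^ (p + 1) * N ^ ((Set.range w).ncard + 1) := Nat.mul_comm _ _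
end

section
/- Let L : {1,…,N}² → ℤ^d satisfy: for every t ∈ ℤ^d and every k ∈ {1,…,N}, #{l : L(k,l) = t} ≤ B and #{l : L(l,k) = t} ≤ B. Let w : {1,…,p} → Λ be a word with F distinct letters, and suppose some letter a in the image of w has a fiber of size exactly one. Then #Π*_L(w) ≤ B^{p+1} · N^{F}, where Π*_L(w) is the set of circuits π : {0,…,p} → {1,…,N} with π(0) = π(p) satisfying: w(i) = w(j) implies L(π(i−1),π(i)) = L(π(j−1),π(j)). -/
section AuxDefs

private def idxIn {N B : ℕ} (hB : 0 < B) (s : Finset (Fin N)) (x : Fin N) : Fin B :=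
  ⟨min (List.idxOf x (s.sort (· ≤ ·))) (B - 1),
    lt_of_le_of_lt (Nat.min_le_right _ _) (by omega)⟩

private lemma idxIn_inj {N B : ℕ} (hB : 0 < B) {s : Finset (Fin N)} (hs : s.card ≤ B)
    {x y : Fin N} (hx : x ∈ s) (hy : y ∈ s)
    (h : idxIn hB s x = idxIn hB s y) : x = y := by
  have lx : List.idxOf x (s.sort (· ≤ ·)) < s.card := by
    rw [← Finset.length_sort (α := Fin N) (· ≤ ·)]
    exact List.idxOf_lt_length_iff.2 ((Finset.mem_sort _).2 hx)
  have ly : List.idxOf y (s.sort (· ≤ ·)) < s.card := by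
    rw [← Finset.length_sort (α := Fin N) (· ≤ ·)]
    exact List.idxOf_lt_length_iff.2 ((Finset.mem_sort _).2 hy)
  have hv : (idxIn hB s x).val = (idxIn hB s y).val := congrArg Fin.val h
  simp only [idxIn] at hv
  have : List.idxOf x (s.sort (· ≤ ·)) = List.idxOf y (s.sort (· ≤ ·)) := by omega
  exact (List.idxOf_inj ((Finset.mem_sort _).2 hx)).1 this

variable {Λ : Type*} [DecidableEq Λ] {p : ℕ}

private def occL (w : Fin p → Λ) (j₀ : Fin p) (b : Λ) : Finset (Fin p) :=
  Finset.univ.filter fun i => i < j₀ ∧ w i = b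

private def occA (w : Fin p → Λ) (b : Λ) : Finset (Fin p) :=
  Finset.univ.filter fun i => w i = b

private lemma mem_occL {w : Fin p → Λ} {j₀ : Fin p} {b : Λ} {i : Fin p} :
    i ∈ occL w j₀ b ↔ i < j₀ ∧ w i = b := by simp [occL]

private lemma mem_occA {w : Fin p → Λ} {b : Λ} {i : Fin p} :
    i ∈ occA w b ↔ w i = b := by simp [occA]

private def firstL (w : Fin p → Λ) (j₀ : Fin p) (b : Λ) : Fin p :=
  if h : (occL w j₀ b).Nonempty then (occL w j₀ b).min' h else j₀

private def lastR (w : Fin p → Λ) (j₀ : Fin p) (b : Λ) : Fin p :=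
  if h : (occA w b).Nonempty then (occA w b).max' h else j₀

private lemma firstL_spec {w : Fin p → Λ} {j₀ : Fin p} {b : Λ}
    (h : (occL w j₀ b).Nonempty) : firstL w j₀ b < j₀ ∧ w (firstL w j₀ b) = b := by
  rw [firstL, dif_pos h]
  exact mem_occL.1 ((occL w j₀ b).min'_mem h)

private lemma firstL_le {w : Fin p → Λ} {j₀ : Fin p} {b : Λ} {i : Fin p}
    (hi : i < j₀) (hw : w i = b) : firstL w j₀ b ≤ i := by
  have h : (occL w j₀ b).Nonempty := ⟨i, mem_occL.2 ⟨hi, hw⟩⟩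
  rw [firstL, dif_pos h]
  exact Finset.min'_le _ _ (mem_occL.2 ⟨hi, hw⟩)

private lemma lastR_spec {w : Fin p → Λ} {j₀ : Fin p} {b : Λ}
    (h : (occA w b).Nonempty) : w (lastR w j₀ b) = b := by
  rw [lastR, dif_pos h]
  exact mem_occA.1 ((occA w b).max'_mem h)

private lemma le_lastR {w : Fin p → Λ} {j₀ : Fin p} {b : Λ} {i : Fin p}
    (hw : w i = b) : i ≤ lastR w j₀ b := by
  have h : (occA w b).Nonempty := ⟨i, mem_occA.2 hw⟩
  rw [lastR, dif_pos h]
  exact Finset.le_max' _ _ (mem_occA.2 hw)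

private def gmap {N : ℕ} (w : Fin p → Λ) (j₀ : Fin p)
    (π : Fin (p + 1) → Fin N) (b : Λ) : Fin N :=
  if b = w j₀ then π 0
  else if (occL w j₀ b).Nonempty then π (firstL w j₀ b).succ
  else π (lastR w j₀ b).castSucc

private def codeF {N B d : ℕ} (hBpos : 0 < B) (L : Fin N → Fin N → Fin d → ℤ)
    (w : Fin p → Λ) (j₀ : Fin p) (π : Fin (p + 1) → Fin N) (i : Fin p) : Fin B :=
  if i < j₀ then
    idxIn hBpos (Finset.univ.filter fun l =>
      L (π i.castSucc) l
        = L (π (firstL w j₀ (w i)).castSucc) (π (firstL w j₀ (w i)).succ))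
      (π i.succ)
  else if j₀ < i then
    (if (occL w j₀ (w i)).Nonempty then
      idxIn hBpos (Finset.univ.filter fun l =>
        L l (π i.succ)
          = L (π (firstL w j₀ (w i)).castSucc) (π (firstL w j₀ (w i)).succ))
        (π i.castSucc)
    else
      idxIn hBpos (Finset.univ.filter fun l =>
        L l (π i.succ)
          = L (π (lastR w j₀ (w i)).castSucc) (π (lastR w j₀ (w i)).succ))
        (π i.castSucc))
  else ⟨0, hBpos⟩

private def rk {p : ℕ} (j₀ : Fin p) (k : Fin (p + 1)) : ℕ :=
  if k.val ≤ j₀.val then k.val else j₀.val + 1 + (p - k.val)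

end AuxDefs

private theorem aux_main {Λ : Type*} [DecidableEq Λ] (N p B d : ℕ) (hBpos : 0 < B)
    (L : Fin N → Fin N → Fin d → ℤ)
    (hB : ∀ (t : Fin d → ℤ) (k : Fin N),
      {l : Fin N | L k l = t}.ncard ≤ B ∧ {l : Fin N | L l k = t}.ncard ≤ B)
    (w : Fin p → Λ)
    (j₀ : Fin p) (hj₀ : ∀ j : Fin p, w j = w j₀ → j = j₀) :
    {π : Fin (p + 1) → Fin N | π 0 = π (Fin.last p) ∧
        ∀ i j : Fin p, w i = w j →
          L (π i.castSucc) (π i.succ) = L (π j.castSucc) (π j.succ)}.ncard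
      ≤ B ^ (p + 1) * N ^ (Set.range w).ncard := by
  classical
  have cardB1 : ∀ (k : Fin N) (t : Fin d → ℤ),
      (Finset.univ.filter fun l => L k l = t).card ≤ B := by
    intro k t
    have h := (hB t k).1
    rwa [Set.ncard_eq_toFinset_card', Set.toFinset_setOf] at h
  have cardB2 : ∀ (k : Fin N) (t : Fin d → ℤ),
      (Finset.univ.filter fun l => L l k = t).card ≤ B := by
    intro k t
    have h := (hB t k).2
    rwa [Set.ncard_eq_toFinset_card', Set.toFinset_setOf] at h
  set S := {π : Fin (p + 1) → Fin N | π 0 = π (Fin.last p) ∧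
      ∀ i j : Fin p, w i = w j →
        L (π i.castSucc) (π i.succ) = L (π j.castSucc) (π j.succ)} with hSdef
  let f : (Fin (p + 1) → Fin N) → ((↥(Set.range w) → Fin N) × (Fin p → Fin B)) :=
    fun π => (fun b => gmap w j₀ π b.1, codeF hBpos L w j₀ π)
  have hpj : j₀.val < p := j₀.isLt
  have hinj : Set.InjOn f S := by
    intro π hπ π' hπ' hf
    obtain ⟨hcirc, hcomp⟩ := hπ
    obtain ⟨hcirc', hcomp'⟩ := hπ'
    have hg : ∀ b : Λ, b ∈ Set.range w → gmap w j₀ π b = gmap w j₀ π' b := by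
      intro b hb
      exact congrFun (congrArg Prod.fst hf) ⟨b, hb⟩
    have hc : ∀ i : Fin p, codeF hBpos L w j₀ π i = codeF hBpos L w j₀ π' i := by
      intro i
      exact congrFun (congrArg Prod.snd hf) i
    have key : ∀ n : ℕ, ∀ k : Fin (p + 1), rk j₀ k ≤ n → π k = π' k := by
      intro n
      induction n using Nat.strong_induction_on with
      | _ n IH =>
        intro k hk
        by_cases hk0 : k.val = 0
        · have hk00 : k = 0 := Fin.ext (by simpa using hk0)
          have h := hg (w j₀) ⟨j₀, rfl⟩
          rw [gmap, gmap, if_pos rfl, if_pos rfl] at h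
          rw [hk00]; exact h
        · by_cases hkj : k.val ≤ j₀.val
          · -- forward positions 1..j₀
            have hkn : k.val ≤ n := by
              have := hk; rw [rk, if_pos hkj] at this; exact this
            set i : Fin p := ⟨k.val - 1, by omega⟩ with hidef
            have hiv : i.val = k.val - 1 := rfl
            have hij : i < j₀ := by rw [Fin.lt_def]; omega
            have hijn : i.val < j₀.val := hij
            have hk_succ : k = i.succ := by
              apply Fin.ext; rw [Fin.val_succ, hiv]; omega
            have hne : (occL w j₀ (w i)).Nonempty := ⟨i, mem_occL.2 ⟨hij, rfl⟩⟩
            have hsp := firstL_spec hne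
            have hfli : (firstL w j₀ (w i)).val ≤ i.val := firstL_le hij rfl
            by_cases hfe : firstL w j₀ (w i) = i
            · -- first occurrence of this letter: recover from gmap
              have hbne : w i ≠ w j₀ := by
                intro h
                have := hj₀ i h
                rw [this] at hijn; omega
              have h := hg (w i) ⟨i, rfl⟩
              rw [gmap, gmap, if_neg hbne, if_neg hbne, if_pos hne, if_pos hne, hfe] at h
              rw [hk_succ]; exact h
            · have hflt : (firstL w j₀ (w i)).val < i.val :=
                lt_of_le_of_ne hfli (fun h => hfe (Fin.ext h))
              have hfj : (firstL w j₀ (w i)).val < j₀.val := hsp.1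
              have e1 : π i.castSucc = π' i.castSucc := by
                refine IH (rk j₀ i.castSucc) ?_ _ le_rfl
                rw [rk, Fin.coe_castSucc, hiv, if_pos (by omega)]; omega
              have e2 : π (firstL w j₀ (w i)).castSucc = π' (firstL w j₀ (w i)).castSucc := by
                refine IH (rk j₀ (firstL w j₀ (w i)).castSucc) ?_ _ le_rfl
                rw [rk, Fin.coe_castSucc, if_pos (by omega)]; omega
              have e3 : π (firstL w j₀ (w i)).succ = π' (firstL w j₀ (w i)).succ := by
                refine IH (rk j₀ (firstL w j₀ (w i)).succ) ?_ _ le_rfl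
                rw [rk, Fin.val_succ, if_pos (by omega)]; omega
              have hmem : π i.succ ∈ (Finset.univ.filter fun l =>
                  L (π i.castSucc) l
                    = L (π (firstL w j₀ (w i)).castSucc) (π (firstL w j₀ (w i)).succ)) :=
                Finset.mem_filter.2 ⟨Finset.mem_univ _, hcomp i _ hsp.2.symm⟩
              have hmem' : π' i.succ ∈ (Finset.univ.filter fun l =>
                  L (π' i.castSucc) l
                    = L (π' (firstL w j₀ (w i)).castSucc) (π' (firstL w j₀ (w i)).succ)) :=
                Finset.mem_filter.2 ⟨Finset.mem_univ _, hcomp' i _ hsp.2.symm⟩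
              rw [← e1, ← e2, ← e3] at hmem'
              have hci := hc i
              rw [codeF, codeF, if_pos hij, if_pos hij, ← e1, ← e2, ← e3] at hci
              have := idxIn_inj hBpos (cardB1 _ _) hmem hmem' hci
              rw [hk_succ]; exact this
          · -- backward positions j₀+1..p
            have hkj' : j₀.val < k.val := by omega
            have hkn : j₀.val + 1 + (p - k.val) ≤ n := by
              have := hk; rw [rk, if_neg hkj] at this; exact this
            by_cases hkp : k.val = p
            · have hkl : k = Fin.last p := Fin.ext (by simpa using hkp)
              have h0 : π 0 = π' 0 := by
                refine IH 0 ?_ 0 ?_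
                · omega
                · rw [rk]; simp
              rw [hkl, ← hcirc, ← hcirc']; exact h0
            · have hkp' : k.val < p := by omega
              set i : Fin p := ⟨k.val, hkp'⟩ with hidef
              have hiv : i.val = k.val := rfl
              have hji : j₀ < i := by rw [Fin.lt_def]; omega
              have hk_cast : k = i.castSucc := by
                apply Fin.ext; rw [Fin.coe_castSucc, hiv]
              have eS : π i.succ = π' i.succ := by
                refine IH (rk j₀ i.succ) ?_ _ le_rfl
                rw [rk, Fin.val_succ, hiv, if_neg (by omega)]; omega
              by_cases hL : (occL w j₀ (w i)).Nonempty
              · have hsp := firstL_spec hL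
                have hfj : (firstL w j₀ (w i)).val < j₀.val := hsp.1
                have e2 : π (firstL w j₀ (w i)).castSucc = π' (firstL w j₀ (w i)).castSucc := by
                  refine IH (rk j₀ (firstL w j₀ (w i)).castSucc) ?_ _ le_rfl
                  rw [rk, Fin.coe_castSucc, if_pos (by omega)]; omega
                have e3 : π (firstL w j₀ (w i)).succ = π' (firstL w j₀ (w i)).succ := by
                  refine IH (rk j₀ (firstL w j₀ (w i)).succ) ?_ _ le_rfl
                  rw [rk, Fin.val_succ, if_pos (by omega)]; omega
                have hmem : π i.castSucc ∈ (Finset.univ.filter fun l =>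
                    L l (π i.succ)
                      = L (π (firstL w j₀ (w i)).castSucc) (π (firstL w j₀ (w i)).succ)) :=
                  Finset.mem_filter.2 ⟨Finset.mem_univ _, hcomp i _ hsp.2.symm⟩
                have hmem' : π' i.castSucc ∈ (Finset.univ.filter fun l =>
                    L l (π' i.succ)
                      = L (π' (firstL w j₀ (w i)).castSucc) (π' (firstL w j₀ (w i)).succ)) :=
                  Finset.mem_filter.2 ⟨Finset.mem_univ _, hcomp' i _ hsp.2.symm⟩
                rw [← eS, ← e2, ← e3] at hmem'
                have hci := hc i
                rw [codeF, codeF, if_neg (lt_asymm hji), if_neg (lt_asymm hji),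
                  if_pos hji, if_pos hji, if_pos hL, if_pos hL, ← eS, ← e2, ← e3] at hci
                have := idxIn_inj hBpos (cardB2 _ _) hmem hmem' hci
                rw [hk_cast]; exact this
              · have hAne : (occA w (w i)).Nonempty := ⟨i, mem_occA.2 rfl⟩
                have hwl : w (lastR w j₀ (w i)) = w i := lastR_spec hAne
                have hile : i.val ≤ (lastR w j₀ (w i)).val := le_lastR rfl
                by_cases hle : lastR w j₀ (w i) = i
                · -- last occurrence of a purely-right letter: recover from gmap
                  have hbne : w i ≠ w j₀ := by
                    intro h
                    have := hj₀ i h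
                    rw [this] at hji; exact lt_irrefl _ hji
                  have h := hg (w i) ⟨i, rfl⟩
                  rw [gmap, gmap, if_neg hbne, if_neg hbne, if_neg hL, if_neg hL, hle] at h
                  rw [hk_cast]; exact h
                · have hilt : i.val < (lastR w j₀ (w i)).val :=
                    lt_of_le_of_ne hile (fun h => hle (Fin.ext h.symm))
                  have hlp : (lastR w j₀ (w i)).val < p := (lastR w j₀ (w i)).isLt
                  have e2 : π (lastR w j₀ (w i)).castSucc = π' (lastR w j₀ (w i)).castSucc := by
                    refine IH (rk j₀ (lastR w j₀ (w i)).castSucc) ?_ _ le_rfl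
                    rw [rk, Fin.coe_castSucc, if_neg (by omega)]; omega
                  have e3 : π (lastR w j₀ (w i)).succ = π' (lastR w j₀ (w i)).succ := by
                    refine IH (rk j₀ (lastR w j₀ (w i)).succ) ?_ _ le_rfl
                    rw [rk, Fin.val_succ, if_neg (by omega)]; omega
                  have hmem : π i.castSucc ∈ (Finset.univ.filter fun l =>
                      L l (π i.succ)
                        = L (π (lastR w j₀ (w i)).castSucc) (π (lastR w j₀ (w i)).succ)) :=
                    Finset.mem_filter.2 ⟨Finset.mem_univ _, hcomp i _ hwl.symm⟩
                  have hmem' : π' i.castSucc ∈ (Finset.univ.filter fun l =>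
                      L l (π' i.succ)
                        = L (π' (lastR w j₀ (w i)).castSucc) (π' (lastR w j₀ (w i)).succ)) :=
                    Finset.mem_filter.2 ⟨Finset.mem_univ _, hcomp' i _ hwl.symm⟩
                  rw [← eS, ← e2, ← e3] at hmem'
                  have hci := hc i
                  rw [codeF, codeF, if_neg (lt_asymm hji), if_neg (lt_asymm hji),
                    if_pos hji, if_pos hji, if_neg hL, if_neg hL, ← eS, ← e2, ← e3] at hci
                  have := idxIn_inj hBpos (cardB2 _ _) hmem hmem' hci
                  rw [hk_cast]; exact this
    funext k
    exact key (rk j₀ k) k le_rfl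
  haveI : Finite ↥(Set.range w) := (Set.finite_range w).to_subtype
  calc S.ncard = (f '' S).ncard := (Set.ncard_image_of_injOn hinj).symm
    _ ≤ Nat.card ((↥(Set.range w) → Fin N) × (Fin p → Fin B)) := by
        rw [← Set.ncard_univ]
        exact Set.ncard_le_ncard (Set.subset_univ _) Set.finite_univ
    _ = N ^ (Set.range w).ncard * B ^ p := by
        rw [Nat.card_prod, Nat.card_fun, Nat.card_fun, Nat.card_coe_set_eq]
        simp [Nat.card_eq_fintype_card]
    _ ≤ B ^ (p + 1) * N ^ (Set.range w).ncard := by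
        rw [Nat.mul_comm]
        exact Nat.mul_le_mul_right _ (Nat.pow_le_pow_right hBpos (Nat.le_succ p))

/-- If a link function `L` on `{1,…,N}²` satisfies Property B with constant `B`
(in both coordinates), `w` is a word of length `p` with `F` distinct letters, and
some letter of `w` has a fiber of size exactly one, then the set `Π*_L(w)` of
circuits compatible with `w` has at most `B^(p+1) · N^F` elements. -/
theorem card_PiStar_word_le_of_single_letter
    {Λ : Type*} (N p B d : ℕ) (L : Fin N → Fin N → Fin d → ℤ)
    (hB : ∀ (t : Fin d → ℤ) (k : Fin N),
      {l : Fin N | L k l = t}.ncard ≤ B ∧ {l : Fin N | L l k = t}.ncard ≤ B)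
    (w : Fin p → Λ)
    (j₀ : Fin p) (hj₀ : ∀ j : Fin p, w j = w j₀ → j = j₀) :
    {π : Fin (p + 1) → Fin N | π 0 = π (Fin.last p) ∧
        ∀ i j : Fin p, w i = w j →
          L (π i.castSucc) (π i.succ) = L (π j.castSucc) (π j.succ)}.ncard
      ≤ B ^ (p + 1) * N ^ (Set.range w).ncard := by
  classical
  obtain rfl | hN := Nat.eq_zero_or_pos N
  · have hempty : {π : Fin (p + 1) → Fin 0 | π 0 = π (Fin.last p) ∧
        ∀ i j : Fin p, w i = w j →
          L (π i.castSucc) (π i.succ) = L (π j.castSucc) (π j.succ)} = ∅ :=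
      Set.eq_empty_of_forall_notMem (fun π _ => (π 0).elim0)
    rw [hempty, Set.ncard_empty]
    exact Nat.zero_le _
  obtain rfl | hBpos := Nat.eq_zero_or_pos B
  · exfalso
    set k : Fin N := ⟨0, hN⟩
    have h1 := (hB (L k k) k).1
    have hpos : 0 < {l : Fin N | L k l = L k k}.ncard :=
      (Set.ncard_pos (Set.toFinite _)).2 ⟨k, rfl⟩
    omega
  exact aux_main N p B d hBpos L hB w j₀ hj₀
end

section
/- Let k ≥ 3 and let S₁,…,S_k be nonempty finite sets (of letters). Form the intersection graph G on vertex set {1,…,k} with an edge {i,j} (i ≠ j) whenever Sᵢ ∩ Sⱼ ≠ ∅. Suppose G is connected but it is NOT the case that G is complete and there exists a single element a with Sᵢ ∩ Sⱼ = {a} for all i ≠ j. Then there exist pairwise distinct indices i₁, i₂, i₃ and elements a₁ ∈ S_{i₁} ∩ S_{i₂}, a₂ ∈ S_{i₂} ∩ S_{i₃} with a₁ ≠ a₂. -/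
/-- Pick a third vertex. -/
lemma exists_third {k : ℕ} (hk : 3 ≤ k) (i j : Fin k) :
    ∃ m : Fin k, m ≠ i ∧ m ≠ j := by
  by_contra h
  push_neg at h
  have hsub : (Finset.univ : Finset (Fin k)) ⊆ {i, j} := by
    intro x _
    rcases eq_or_ne x i with rfl | hx
    · simp
    · simp [h x hx]
  have := Finset.card_le_card hsub
  have h2 : ({i, j} : Finset (Fin k)).card ≤ 2 := Finset.card_insert_le _ _ |>.trans (by simp)
  simp [Finset.card_univ] at this
  omega

/-- Two distinct witnesses on the same edge: extend to a path of length two. -/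
lemma aux1 {Λ : Type*} [DecidableEq Λ] {k : ℕ} (hk : 3 ≤ k) (S : Fin k → Finset Λ)
    (hcomp : ∀ i j : Fin k, i ≠ j → (S i ∩ S j).Nonempty)
    {i j : Fin k} {a b : Λ} (hij : i ≠ j)
    (ha : a ∈ S i ∩ S j) (hb : b ∈ S i ∩ S j) (hab : a ≠ b) :
    ∃ i₁ i₂ i₃ : Fin k, i₁ ≠ i₂ ∧ i₂ ≠ i₃ ∧ i₁ ≠ i₃ ∧
      ∃ a₁ ∈ S i₁ ∩ S i₂, ∃ a₂ ∈ S i₂ ∩ S i₃, a₁ ≠ a₂ := by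
  obtain ⟨m, hmi, hmj⟩ := exists_third hk i j
  obtain ⟨c, hc⟩ := hcomp j m (Ne.symm hmj)
  by_cases hca : c = a
  · exact ⟨i, j, m, hij, Ne.symm hmj, Ne.symm hmi, b, hb, c, hc, by rw [hca]; exact (Ne.symm hab)⟩
  · exact ⟨i, j, m, hij, Ne.symm hmj, Ne.symm hmi, a, ha, c, hc, fun h => hca h.symm⟩

/-- Two distinct witnesses anywhere in a complete intersection graph: path of length two. -/
lemma aux2 {Λ : Type*} [DecidableEq Λ] {k : ℕ} (hk : 3 ≤ k) (S : Fin k → Finset Λ)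
    (hcomp : ∀ i j : Fin k, i ≠ j → (S i ∩ S j).Nonempty)
    {i j p q : Fin k} {a b : Λ} (hij : i ≠ j) (hpq : p ≠ q)
    (ha : a ∈ S i ∩ S j) (hb : b ∈ S p ∩ S q) (hab : a ≠ b) :
    ∃ i₁ i₂ i₃ : Fin k, i₁ ≠ i₂ ∧ i₂ ≠ i₃ ∧ i₁ ≠ i₃ ∧
      ∃ a₁ ∈ S i₁ ∩ S i₂, ∃ a₂ ∈ S i₂ ∩ S i₃, a₁ ≠ a₂ := by
  simp only [Finset.mem_inter] at ha hb
  obtain ⟨hai, haj⟩ := ha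
  obtain ⟨hbp, hbq⟩ := hb
  by_cases hjp : j = p
  · subst hjp
    by_cases hiq : i = q
    · subst hiq
      exact aux1 hk S hcomp hij (Finset.mem_inter.mpr ⟨hai, haj⟩)
        (Finset.mem_inter.mpr ⟨hbq, hbp⟩) hab
    · exact ⟨i, j, q, hij, hpq, hiq, a, Finset.mem_inter.mpr ⟨hai, haj⟩,
        b, Finset.mem_inter.mpr ⟨hbp, hbq⟩, hab⟩
  · by_cases hjq : j = q
    · subst hjq
      by_cases hip : i = p
      · subst hip
        exact aux1 hk S hcomp hij (Finset.mem_inter.mpr ⟨hai, haj⟩)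
          (Finset.mem_inter.mpr ⟨hbp, hbq⟩) hab
      · exact ⟨i, j, p, hij, Ne.symm hpq, hip, a, Finset.mem_inter.mpr ⟨hai, haj⟩,
          b, Finset.mem_inter.mpr ⟨hbq, hbp⟩, hab⟩
    · by_cases hip : i = p
      · subst hip
        exact ⟨j, i, q, Ne.symm hij, hpq, hjq, a, Finset.mem_inter.mpr ⟨haj, hai⟩,
          b, Finset.mem_inter.mpr ⟨hbp, hbq⟩, hab⟩
      · by_cases hiq : i = q
        · subst hiq
          exact ⟨j, i, p, Ne.symm hij, Ne.symm hpq, hjp, a, Finset.mem_inter.mpr ⟨haj, hai⟩,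
            b, Finset.mem_inter.mpr ⟨hbq, hbp⟩, hab⟩
        · -- all four distinct
          obtain ⟨c, hc⟩ := hcomp j p hjp
          rw [Finset.mem_inter] at hc
          by_cases hca : c = a
          · subst hca
            exact ⟨j, p, q, hjp, hpq, hjq, c, Finset.mem_inter.mpr ⟨hc.1, hc.2⟩,
              b, Finset.mem_inter.mpr ⟨hbp, hbq⟩, hab⟩
          · exact ⟨i, j, p, hij, hjp, hip, a, Finset.mem_inter.mpr ⟨hai, haj⟩,
              c, Finset.mem_inter.mpr ⟨hc.1, hc.2⟩, fun h => hca h.symm⟩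

/-- Let `G` be the intersection graph of nonempty finite sets `S₁,…,S_k` (`k ≥ 3`).
If `G` is connected but is not a clique cluster (i.e. it is not the case that `G` is
complete with all pairwise intersections equal to the same singleton `{a}`), then
there are pairwise distinct `i₁, i₂, i₃` and elements `a₁ ∈ S_{i₁} ∩ S_{i₂}`,
`a₂ ∈ S_{i₂} ∩ S_{i₃}` with `a₁ ≠ a₂`. -/
theorem exists_two_distinct_witnesses_of_not_clique_cluster
    {Λ : Type*} [DecidableEq Λ] (k : ℕ) (hk : 3 ≤ k)
    (S : Fin k → Finset Λ) (hS : ∀ i, (S i).Nonempty)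
    (G : SimpleGraph (Fin k))
    (hG : ∀ i j, G.Adj i j ↔ i ≠ j ∧ (S i ∩ S j).Nonempty)
    (hconn : G.Connected)
    (hnot : ¬ ((∀ i j : Fin k, i ≠ j → G.Adj i j) ∧
      ∃ a : Λ, ∀ i j : Fin k, i ≠ j → S i ∩ S j = {a})) :
    ∃ i₁ i₂ i₃ : Fin k, i₁ ≠ i₂ ∧ i₂ ≠ i₃ ∧ i₁ ≠ i₃ ∧
      ∃ a₁ ∈ S i₁ ∩ S i₂, ∃ a₂ ∈ S i₂ ∩ S i₃, a₁ ≠ a₂ := by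
  by_cases hcomp : ∀ i j : Fin k, i ≠ j → G.Adj i j
  · -- complete case
    have hcomp' : ∀ i j : Fin k, i ≠ j → (S i ∩ S j).Nonempty :=
      fun i j h => ((hG i j).mp (hcomp i j h)).2
    have hnot' : ∀ a : Λ, ∃ i j : Fin k, i ≠ j ∧ S i ∩ S j ≠ {a} := by
      intro a
      by_contra h
      push_neg at h
      exact hnot ⟨hcomp, a, h⟩
    have h01 : (⟨0, by omega⟩ : Fin k) ≠ ⟨1, by omega⟩ := by
      simp [Fin.ext_iff]
    obtain ⟨a, ha⟩ := hcomp' _ _ h01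
    obtain ⟨p, q, hpq, hne⟩ := hnot' a
    have hnonempty := hcomp' p q hpq
    have hb : ∃ b ∈ S p ∩ S q, b ≠ a := by
      by_contra h
      push_neg at h
      apply hne
      apply Finset.eq_singleton_iff_unique_mem.mpr
      refine ⟨?_, h⟩
      obtain ⟨b, hbm⟩ := hnonempty
      have := h b hbm
      rwa [this] at hbm
    obtain ⟨b, hbm, hba⟩ := hb
    exact aux2 hk S hcomp' h01 hpq ha hbm (Ne.symm hba)
  · -- non-complete case: shortest path argument
    push_neg at hcomp
    obtain ⟨u, v, huv, hnadj⟩ := hcomp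
    have hd0 : G.dist u v ≠ 0 :=
      SimpleGraph.dist_ne_zero_iff_ne_and_reachable.mpr ⟨huv, hconn u v⟩
    obtain ⟨p, hp⟩ := SimpleGraph.exists_walk_of_dist_ne_zero hd0
    cases p with
    | nil => exact absurd rfl huv
    | @cons _ w _ h q =>
      cases q with
      | nil => exact absurd h hnadj
      | @cons _ x _ h₂ r =>
        -- h : G.Adj u w, h₂ : G.Adj w x, r : G.Walk x v
        simp only [SimpleGraph.Walk.length_cons] at hp
        have hdr := SimpleGraph.dist_le r
        have hux : u ≠ x := by
          rintro rfl
          have := SimpleGraph.dist_le r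
          omega
        have hnadjux : ¬ G.Adj u x := by
          intro hadj
          have := SimpleGraph.dist_le (SimpleGraph.Walk.cons hadj r)
          simp only [SimpleGraph.Walk.length_cons] at this
          omega
        have hSux : ¬ (S u ∩ S x).Nonempty := by
          intro hne
          exact hnadjux ((hG u x).mpr ⟨hux, hne⟩)
        obtain ⟨huw, ⟨a₁, ha₁⟩⟩ := (hG u w).mp h
        obtain ⟨hwx, ⟨a₂, ha₂⟩⟩ := (hG w x).mp h₂
        refine ⟨u, w, x, huw, hwx, hux, a₁, ha₁, a₂, ha₂, ?_⟩
        rintro rfl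
        rw [Finset.mem_inter] at ha₁ ha₂
        exact hSux ⟨a₁, Finset.mem_inter.mpr ⟨ha₁.1, ha₂.2⟩⟩
end
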